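/- A sequence of nonnegative integers s = (s_i : i ≥ 0) with finite support is the empirical children distribution of some finite plane tree if and only if s_0 ≥ 1 and Σ_{i≥0} s_i = 1 + Σ_{i≥0} i·s_i < ∞. -/

import Mathlib

open scoped BigOperators Classical
open Filter MeasureTheory

namespace Paper

inductive PlaneTree : Type
  | node : List PlaneTree → PlaneTree

namespace PlaneTree

def deg : PlaneTree → ℕ
  | node ts => ts.length

mutual
  def pos : PlaneTree → List (List ℕ)
    | node ts => [] :: posF 0 ts
  def posF : ℕ → List PlaneTree → List (List ℕ)
    | _, [] => []
    | i, t :: ts => (pos t).map (fun q => i :: q) ++ posF (i + 1) ts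
end

mutual
  def dfsDeg : PlaneTree → List ℕ
    | node ts => ts.length :: dfsDegF ts
  def dfsDegF : List PlaneTree → List ℕ
    | [] => []
    | t :: ts => dfsDeg t ++ dfsDegF ts
end

def subtreeAt : PlaneTree → List ℕ → Option PlaneTree
  | t, [] => some t
  | node ts, i :: p =>
    match ts[i]? with
    | some t' => subtreeAt t' p
    | none => none

def numChild (t : PlaneTree) (p : List ℕ) : ℕ := ((subtreeAt t p).map deg).getD 0

def IsVertex (t : PlaneTree) (p : List ℕ) : Prop := (subtreeAt t p).isSome

def IsLeaf (t : PlaneTree) (p : List ℕ) : Prop := (subtreeAt t p).isSome ∧ numChild t p = 0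

/-- number of vertices of `t` having exactly `i` children (empirical children distribution) -/
def ecd (t : PlaneTree) (i : ℕ) : ℕ :=
  ((pos t).filter fun p => decide (numChild t p = i)).length

/-- ECD of a plane forest with ranked roots -/
def ecdF (f : List PlaneTree) (i : ℕ) : ℕ := (f.map fun t => ecd t i).sum

/-- number of children of the `j`-th root of a forest -/
def rootDeg (f : List PlaneTree) (j : ℕ) : ℕ := deg (f.getD j (node []))

/-- the set of plane forests with ranked roots with ECD `s` -/
def forestSet (s : ℕ → ℕ) : Set (List PlaneTree) := {f | ∀ i, ecdF f i = s i}

/-- the set of plane trees with ECD `s` -/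
def treeSet (s : ℕ → ℕ) : Set PlaneTree := {t | ∀ i, ecd t i = s i}

/-- strict depth-first (preorder) order on positions -/
def dfLT (p q : List ℕ) : Prop := List.Lex (· < ·) p q

def parent (p : List ℕ) : List ℕ := p.dropLast

/-- `q` is a strict ancestor of `p`, i.e. `q ∈ [ρ, p)` -/
def StrictAnc (q p : List ℕ) : Prop := q <+: p ∧ q ≠ p

/-- admissible (ordered) pair of leaves -/
def Admissible (t : PlaneTree) (u v : List ℕ) : Prop :=
  IsLeaf t u ∧ IsLeaf t v ∧ 2 ≤ v.length ∧
    StrictAnc (parent (parent v)) (parent u) ∧ dfLT (parent u) (parent v)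

def ASet (t : PlaneTree) : Set (List ℕ × List ℕ) := {uv | Admissible t uv.1 uv.2}

def fA (t : PlaneTree) (u : List ℕ) : Set (List ℕ) := {v | Admissible t u v}

def B2 (t : PlaneTree) (u : List ℕ) : Set (List ℕ) :=
  {v | IsVertex t v ∧ 2 ≤ v.length ∧ StrictAnc (parent (parent v)) u}

noncomputable def leafFinset (t : PlaneTree) : Finset (List ℕ) :=
  ((pos t).toFinset).filter fun p => IsLeaf t p

def leafOf {k : ℕ} (w : Fin k → List ℕ × List ℕ) (y : Fin k × Bool) : List ℕ :=
  if y.2 then (w y.1).1 else (w y.1).2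

/-- ordered `k`-tuples of admissible pairs using `2k` distinct leaves -/
def AkOrd (t : PlaneTree) (k : ℕ) : Set (Fin k → List ℕ × List ℕ) :=
  {w | (∀ a, Admissible t (w a).1 (w a).2) ∧ Function.Injective (leafOf w)}

/-- unordered collections of `k` admissible pairs using `2k` distinct leaves -/
def Ak (t : PlaneTree) (k : ℕ) : Set (Finset (List ℕ × List ℕ)) :=
  {x | x.card = k ∧ (∀ uv ∈ x, Admissible t uv.1 uv.2) ∧
    Set.InjOn (fun y : (List ℕ × List ℕ) × Bool => if y.2 then y.1.1 else y.1.2)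
      {y | y.1 ∈ x}}

/-- the set `T_s^(k)` of pairs of a plane tree with ECD `s` and a set of `k` admissible pairs -/
def Tsk (s : ℕ → ℕ) (k : ℕ) : Set (PlaneTree × Finset (List ℕ × List ℕ)) :=
  {tx | (∀ i, ecd tx.1 i = s i) ∧ tx.2 ∈ Ak tx.1 k}

end PlaneTree

/-- labeled plane trees -/
inductive LTree : Type
  | node : ℕ → List LTree → LTree

namespace LTree

mutual
  def shape : LTree → PlaneTree
    | node _ ts => .node (shapeF ts)
  def shapeF : List LTree → List PlaneTree
    | [] => []
    | t :: ts => shape t :: shapeF ts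
end

mutual
  def dfsLab : LTree → List ℕ
    | node a ts => a :: dfsLabF ts
  def dfsLabF : List LTree → List ℕ
    | [] => []
    | t :: ts => dfsLab t ++ dfsLabF ts
end

mutual
  def dfsDeg : LTree → List ℕ
    | node _ ts => ts.length :: dfsDegF ts
  def dfsDegF : List LTree → List ℕ
    | [] => []
    | t :: ts => dfsDeg t ++ dfsDegF ts
end

def subtreeAt : LTree → List ℕ → Option LTree
  | t, [] => some t
  | node _ ts, i :: p =>
    match ts[i]? with
    | some t' => subtreeAt t' p
    | none => none

def labelAt (t : LTree) (p : List ℕ) : ℕ :=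
  ((subtreeAt t p).map fun u => match u with | node a _ => a).getD 0

end LTree

/-- partial-sum steps of the permuted walk -/
def steps {m : ℕ} (c : Fin m → ℕ) (π : Equiv.Perm (Fin m)) : List ℤ :=
  List.ofFn fun i => (c (π i) : ℤ) - 1

/-- first index `j ∈ [1, length]` at which the partial sums attain their minimum -/
noncomputable def firstMinIdx (l : List ℤ) : ℕ :=
  (((Finset.Icc 1 l.length).filter fun j =>
      ∀ j' ∈ Finset.Icc 1 l.length, (l.take j).sum ≤ (l.take j').sum).min).untopD 0

/-- the DFS vertex sequence obtained by rotating the uniformly permuted vertex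
sequence at the first minimum of its Łukasiewicz-type walk (Vervaat transform) -/
noncomputable def rotSeq {m : ℕ} (c : Fin m → ℕ) (π : Equiv.Perm (Fin m)) : List (Fin m) :=
  (List.ofFn fun i => π i).rotate (firstMinIdx (steps c π))

/-- the degree of a vertex in a (simple) edge set -/
def degIn (E : Finset (Sym2 ℕ)) (v : ℕ) : ℕ := (E.filter fun e => v ∈ e).card

/-- degree of a vertex in a multigraph given by an edge multiset (loops count twice) -/
def mdeg (E : Multiset (Sym2 ℕ)) (v : ℕ) : ℕ :=
  (E.map fun e => (if v ∈ e then 1 else 0) + (if e = s(v, v) then 1 else 0)).sum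

/-- connectivity of a (multi)graph on vertex set `V` with edges `E` -/
def ConnOn (V : Finset ℕ) (E : Set (Sym2 ℕ)) : Prop :=
  ∀ a ∈ V, ∀ b ∈ V, Relation.ReflTransGen (fun a b => s(a, b) ∈ E) a b

/-- the set of simple connected labeled graphs on `{1, …, m}` with degree sequence `d` -/
def GconSet (m : ℕ) (d : ℕ → ℕ) : Set (Finset (Sym2 ℕ)) :=
  {E | (∀ e ∈ E, ¬ e.IsDiag) ∧ (∀ e ∈ E, ∀ v ∈ e, v ∈ Finset.Icc 1 m) ∧
       (∀ v ∈ Finset.Icc 1 m, degIn E v = d v) ∧ ConnOn (Finset.Icc 1 m) (E : Set (Sym2 ℕ))}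

/-- ECD of the children sequence `(d̃₂ − 1, …, d̃_{m̃} − 1, 0, …, 0)` (with `2k` zeros) -/
def ecdFromDeg (m k : ℕ) (d : ℕ → ℕ) (i : ℕ) : ℕ :=
  ((Finset.Icc 2 m).filter fun j => d j = i + 1).card + if i = 0 then 2 * k else 0

/-- `≪` order on admissible pairs -/
def pairLT (a b : List ℕ × List ℕ) : Prop :=
  PlaneTree.dfLT (PlaneTree.parent a.1) (PlaneTree.parent b.1) ∨
    (PlaneTree.parent a.1 = PlaneTree.parent b.1 ∧
      PlaneTree.dfLT (PlaneTree.parent a.2) (PlaneTree.parent b.2))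

/-- labeled elements of `T_s^(k)` as in the sampling algorithm: a labeled plane tree whose
labels are `{2, …, m̃ + 2k}`, in which the vertex labeled `j ≤ m̃` has `d̃_j − 1` children and
the vertices labeled `> m̃` are leaves, together with a `≪`-increasing tuple of `k` admissible
pairs of leaves with distinct leaves, the `j`-th pair carrying labels `(m̃+2j−1, m̃+2j)`. -/
def IsLabeledElement (m k : ℕ) (d : ℕ → ℕ) (t : LTree)
    (x : Fin k → List ℕ × List ℕ) : Prop :=
  (LTree.dfsLab t).Perm (List.range' 2 (m - 1 + 2 * k)) ∧
  (∀ p ∈ PlaneTree.pos (LTree.shape t),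
    PlaneTree.numChild (LTree.shape t) p =
      (if 2 ≤ LTree.labelAt t p ∧ LTree.labelAt t p ≤ m then d (LTree.labelAt t p) - 1 else 0)) ∧
  (∀ j, PlaneTree.Admissible (LTree.shape t) (x j).1 (x j).2) ∧
  Function.Injective (PlaneTree.leafOf x) ∧
  (∀ j j' : Fin k, j < j' → pairLT (x j) (x j')) ∧
  (∀ j : Fin k, LTree.labelAt t (x j).1 = m + 2 * (j : ℕ) + 1 ∧
      LTree.labelAt t (x j).2 = m + 2 * (j : ℕ) + 2)

/-- the edge multiset of the graph `I(t, x)`: tree edges, with the leaves of the admissible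
pairs deleted and an edge joining the two parents of each admissible pair added -/
noncomputable def Iedges (t : LTree) {k : ℕ} (x : Fin k → List ℕ × List ℕ) :
    Multiset (Sym2 ℕ) :=
  (↑(((PlaneTree.pos (LTree.shape t)).filter fun p =>
        decide (p ≠ ([] : List ℕ) ∧ ∀ j, p ≠ (x j).1 ∧ p ≠ (x j).2)).map
      fun p => s(LTree.labelAt t (PlaneTree.parent p), LTree.labelAt t p)) : Multiset (Sym2 ℕ))
  + ↑(List.ofFn fun j =>
      s(LTree.labelAt t (PlaneTree.parent (x j).1), LTree.labelAt t (PlaneTree.parent (x j).2)))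

/- Brownian excursion: Gaussian/Bessel kernels and finite-dimensional densities -/
noncomputable def gaussD (s x : ℝ) : ℝ := Real.exp (-(x ^ 2) / (2 * s)) / Real.sqrt (2 * Real.pi * s)

noncomputable def killedK (s x y : ℝ) : ℝ := gaussD s (y - x) - gaussD s (y + x)

noncomputable def bes3K (s x y : ℝ) : ℝ := (y / x) * killedK s x y

noncomputable def exStart (t x : ℝ) : ℝ :=
  Real.sqrt (2 / Real.pi) * x ^ 2 * t ^ (-(3 : ℝ) / 2) * Real.exp (-(x ^ 2) / (2 * t))

noncomputable def exEnd (s x : ℝ) : ℝ := (2 / s) * gaussD s x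

/-- finite-dimensional density of the standard Brownian excursion at times `t 0 < … < t n` -/
noncomputable def exFdd {n : ℕ} (t : Fin (n + 1) → ℝ) (x : Fin (n + 1) → ℝ) : ℝ :=
  if ∀ i, 0 < x i then
    Real.sqrt (Real.pi / 2) * exStart (t 0) (x 0) *
      (∏ i : Fin n, bes3K (t i.succ - t i.castSucc) (x i.castSucc) (x i.succ)) *
      exEnd (1 - t (Fin.last n)) (x (Fin.last n))
  else 0

/-- `e` is a standard Brownian excursion on `[0,1]`: continuous nonnegative paths vanishing at
the endpoints, positive inside, with the excursion finite-dimensional densities. -/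
def IsStdBrownianExcursion {Ω : Type*} [MeasureSpace Ω] (e : Ω → ℝ → ℝ) : Prop :=
  (∀ ω, Continuous (e ω)) ∧ (∀ ω, e ω 0 = 0) ∧ (∀ ω, e ω 1 = 0) ∧
  (∀ ω, ∀ x ∈ Set.Ioo (0 : ℝ) 1, 0 < e ω x) ∧
  (∀ t : ℝ, Measurable fun ω => e ω t) ∧
  ∀ (n : ℕ) (t : Fin (n + 1) → ℝ), StrictMono t → 0 < t 0 → t (Fin.last n) < 1 →
    Measure.map (fun ω i => e ω (t i)) (volume : Measure Ω)
      = volume.withDensity fun x => ENNReal.ofReal (exFdd t x)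

/-- `j`-th smallest value (0-based) among `ω 0, …, ω (m−1)` -/
noncomputable def orderStat {m : ℕ} (ω : Fin m → ℝ) (j : ℕ) : ℝ :=
  ((Multiset.map ω Finset.univ.val).sort (· ≤ ·)).getD j 0

end Paper


namespace Paper.PlaneTree

mutual
  theorem map_pos_eq : ∀ t : PlaneTree, ((pos t).map fun p => numChild t p) = dfsDeg t
    | node ts => by
      rw [pos, dfsDeg, List.map_cons]
      have h0 : numChild (node ts) [] = ts.length := by
        simp [numChild, subtreeAt, deg]
      rw [h0]
      have := map_posF_eq ts []
      simpa using this
  theorem map_posF_eq : ∀ (ts pre : List PlaneTree),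
      ((posF pre.length ts).map fun p => numChild (node (pre ++ ts)) p) = dfsDegF ts
    | [], pre => by simp [posF, dfsDegF]
    | t :: ts, pre => by
      rw [posF, dfsDegF, List.map_append]
      congr 1
      · rw [List.map_map]
        have hget : (pre ++ t :: ts)[pre.length]? = some t := by
          rw [List.getElem?_append_right le_rfl]; simp
        have h1 : ∀ q, numChild (node (pre ++ t :: ts)) (pre.length :: q) = numChild t q := by
          intro q
          simp [numChild, subtreeAt, hget]
        calc ((pos t).map fun q => numChild (node (pre ++ t :: ts)) (pre.length :: q))
            = (pos t).map fun q => numChild t q := by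
              exact List.map_congr_left fun q _ => h1 q
          _ = dfsDeg t := map_pos_eq t
      · have := map_posF_eq ts (pre ++ [t])
        simpa [List.append_assoc] using this
end

mutual
  theorem dfsDeg_sum : ∀ t : PlaneTree, (dfsDeg t).sum + 1 = (dfsDeg t).length
    | node ts => by
      have := dfsDegF_sum ts
      rw [dfsDeg]
      simp only [List.sum_cons, List.length_cons]
      omega
  theorem dfsDegF_sum : ∀ ts : List PlaneTree, (dfsDegF ts).sum + ts.length = (dfsDegF ts).length
    | [] => by simp [dfsDegF]
    | t :: ts => by
      have h1 := dfsDeg_sum t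
      have h2 := dfsDegF_sum ts
      rw [dfsDegF]
      simp only [List.sum_append, List.length_append, List.length_cons]
      omega
end

theorem ecd_eq_count (t : PlaneTree) (i : ℕ) : ecd t i = (dfsDeg t).count i := by
  rw [ecd, ← List.countP_eq_length_filter, ← map_pos_eq, List.count, List.countP_map]
  apply List.countP_congr
  intro p _
  simp [Function.comp]

end Paper.PlaneTree

theorem list_len_le_sum (l : List ℕ) (h : ∀ x ∈ l, x ≠ 0) : l.length ≤ l.sum := by
  induction l with
  | nil => simp
  | cons a l ih =>
    simp only [List.length_cons, List.sum_cons]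
    have := h a (by simp)
    have := ih fun x hx => h x (by simp [hx])
    omega

theorem support_count_finite (l : List ℕ) :
    (Function.support fun i => l.count i).Finite := by
  apply Set.Finite.subset l.toFinset.finite_toSet
  intro i hi
  simp only [Function.support, Set.mem_setOf_eq] at hi
  simpa using List.count_pos_iff.mp (Nat.pos_of_ne_zero hi)

theorem finsum_count (l : List ℕ) : ∑ᶠ i, l.count i = l.length := by
  induction l with
  | nil => simp
  | cons a l ih =>
    have hcnt : (fun i => (a :: l).count i) = fun i => l.count i + if a = i then 1 else 0 := by
      funext i
      rw [List.count_cons]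
      simp
    calc ∑ᶠ i, (a :: l).count i
        = ∑ᶠ i, (l.count i + if a = i then 1 else 0) := by rw [hcnt]
      _ = (∑ᶠ i, l.count i) + ∑ᶠ i, (if a = i then 1 else 0) := by
          apply finsum_add_distrib (support_count_finite l)
          apply Set.Finite.subset (Set.finite_singleton a)
          intro i hi
          simp only [Function.support, Set.mem_setOf_eq] at hi
          simp only [Set.mem_singleton_iff]
          by_contra hne
          exact hi (if_neg fun he => hne he.symm)
      _ = l.length + 1 := by
          rw [ih, finsum_eq_single _ a (fun b hb => by rw [if_neg fun he => hb he.symm]), if_pos rfl]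
      _ = (a :: l).length := by simp

theorem finsum_mul_count (l : List ℕ) : ∑ᶠ i, i * l.count i = l.sum := by
  induction l with
  | nil => simp
  | cons a l ih =>
    have hcnt : (fun i => i * (a :: l).count i)
        = fun i => i * l.count i + i * (if a = i then 1 else 0) := by
      funext i
      rw [List.count_cons, Nat.mul_add]
      simp
    calc ∑ᶠ i, i * (a :: l).count i
        = ∑ᶠ i, (i * l.count i + i * (if a = i then 1 else 0)) := by rw [hcnt]
      _ = (∑ᶠ i, i * l.count i) + ∑ᶠ i, i * (if a = i then 1 else 0) := by
          apply finsum_add_distrib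
          · apply Set.Finite.subset (support_count_finite l)
            intro i hi
            simp only [Function.support, Set.mem_setOf_eq] at hi ⊢
            intro h0; apply hi; rw [h0, Nat.mul_zero]
          · apply Set.Finite.subset (Set.finite_singleton a)
            intro i hi
            simp only [Function.support, Set.mem_setOf_eq] at hi
            simp only [Set.mem_singleton_iff]
            by_contra hne
            apply hi
            rw [if_neg fun he => hne he.symm, Nat.mul_zero]
      _ = l.sum + a := by
          rw [ih, finsum_eq_single _ a (fun b hb => by rw [if_neg fun he => hb he.symm, Nat.mul_zero]), if_pos rfl, Nat.mul_one]
      _ = (a :: l).sum := by simp [Nat.add_comm]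

namespace Paper.PlaneTree

def cat : List ℕ → PlaneTree
  | [] => node []
  | d :: ds => node (cat ds :: List.replicate (d - 1) (node []))

theorem dfsDegF_replicate (n : ℕ) :
    dfsDegF (List.replicate n (node [])) = List.replicate n 0 := by
  induction n with
  | zero => rfl
  | succ n ih =>
    rw [List.replicate_succ, dfsDegF, dfsDeg, dfsDegF, ih]
    simp [List.replicate_succ]

theorem count_dfsDeg_cat (j : ℕ) :
    ∀ ds : List ℕ, (∀ d ∈ ds, 1 ≤ d) →
      (dfsDeg (cat ds)).count j
        = ds.count j + if j = 0 then 1 + (ds.map (· - 1)).sum else 0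
  | [], _ => by
    rw [cat, dfsDeg, dfsDegF]
    rw [List.count_cons]
    simp only [List.count_nil, List.map_nil, List.sum_nil, beq_iff_eq]
    by_cases hj : j = 0 <;> simp [hj, fun h : ¬ j = 0 => h] <;> omega
  | d :: ds, h => by
    have hd : 1 ≤ d := h d (by simp)
    have ih := count_dfsDeg_cat j ds (fun x hx => h x (by simp [hx]))
    rw [cat, dfsDeg, dfsDegF, dfsDegF_replicate]
    rw [List.count_cons, List.count_append, List.count_replicate, ih]
    simp only [List.length_cons, List.length_replicate, List.count_cons,
      List.map_cons, List.sum_cons, beq_iff_eq]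
    have hlen : d - 1 + 1 = d := by omega
    rw [hlen]
    split_ifs <;> omega

end Paper.PlaneTree

theorem count_flatMap_repl (s : ℕ → ℕ) (j : ℕ) :
    ∀ L : List ℕ, L.Nodup →
      (L.flatMap fun i => List.replicate (s i) i).count j = if j ∈ L then s j else 0
  | [], _ => by simp
  | i :: L, h => by
    rw [List.flatMap_cons, List.count_append, List.count_replicate,
      count_flatMap_repl s j L h.of_cons]
    by_cases hji : j = i
    · subst hji
      have : j ∉ L := (List.nodup_cons.mp h).1
      simp [this]
    · have hij : i ≠ j := fun he => hji he.symm
      have : (i == j) = false := beq_eq_false_iff_ne.mpr hij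
      simp only [this, if_false, List.mem_cons]
      by_cases hm : j ∈ L <;> simp [hm, hji]

theorem sum_flatMap_repl (s : ℕ → ℕ) :
    ∀ L : List ℕ,
      ((L.flatMap fun i => List.replicate (s i) i).map (· - 1)).sum
        = (L.map fun i => (i - 1) * s i).sum
  | [] => by simp
  | i :: L => by
    rw [List.flatMap_cons, List.map_append, List.sum_append, sum_flatMap_repl s L,
      List.map_replicate, List.sum_replicate, List.map_cons, List.sum_cons]
    simp [Nat.mul_comm]

theorem range_map_sum (f : ℕ → ℕ) (N : ℕ) :
    ((List.range N).map f).sum = ∑ i ∈ Finset.range N, f i := by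
  induction N with
  | zero => simp
  | succ n ih =>
    rw [List.range_succ, List.map_append, List.sum_append, Finset.sum_range_succ, ih]
    simp

open Paper Paper.PlaneTree in
theorem tenable_iff' (s : ℕ → ℕ) (hsupp : (Function.support s).Finite) :
    (∃ t : PlaneTree, ∀ i, ecd t i = s i) ↔
      (1 ≤ s 0 ∧ ∑ᶠ i, s i = 1 + ∑ᶠ i, i * s i) := by
  constructor
  · rintro ⟨t, ht⟩
    have hs : ∀ i, s i = (dfsDeg t).count i := fun i => (ht i).symm.trans (ecd_eq_count t i)
    constructor
    · rw [hs 0]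
      by_contra hlt
      have h0 : (dfsDeg t).count 0 = 0 := by omega
      have hmem : (0 : ℕ) ∉ dfsDeg t := List.count_eq_zero.mp h0
      have hne : ∀ x ∈ dfsDeg t, x ≠ 0 := fun x hx hx0 => hmem (hx0 ▸ hx)
      have h1 := list_len_le_sum _ hne
      have h2 := dfsDeg_sum t
      omega
    · have h2 := dfsDeg_sum t
      calc ∑ᶠ i, s i = ∑ᶠ i, (dfsDeg t).count i := finsum_congr fun i => hs i
        _ = (dfsDeg t).length := finsum_count _
        _ = 1 + (dfsDeg t).sum := by omega
        _ = 1 + ∑ᶠ i, i * s i := by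
            have hms : ∑ᶠ i, i * s i = ∑ᶠ i, i * (dfsDeg t).count i :=
              finsum_congr fun i => by rw [hs i]
            rw [hms, finsum_mul_count]
  · rintro ⟨h0, hbal⟩
    classical
    obtain ⟨M, hN⟩ : ∃ M : ℕ, ∀ i, M + 1 ≤ i → s i = 0 := by
      refine ⟨hsupp.toFinset.sup id, fun i hi => ?_⟩
      by_contra hne
      have hmem : i ∈ hsupp.toFinset := hsupp.mem_toFinset.mpr hne
      have := Finset.le_sup (f := id) hmem
      simp only [id] at this
      omega
    set N := M + 1 with hNdef
    set L := List.range' 1 N with hL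
    set ds := L.flatMap fun i => List.replicate (s i) i with hds
    have hds1 : ∀ d ∈ ds, 1 ≤ d := by
      intro d hd
      rw [hds, List.mem_flatMap] at hd
      obtain ⟨i, hiL, hdr⟩ := hd
      rw [List.eq_of_mem_replicate hdr]
      exact (List.mem_range'_1.mp hiL).1
    have hcount : ∀ j, ds.count j = if j ∈ L then s j else 0 :=
      fun j => count_flatMap_repl s j L (List.nodup_range')
    have hsum : (ds.map (· - 1)).sum = ∑ i ∈ Finset.range N, i * s (i + 1) := by
      rw [hds, sum_flatMap_repl s L, hL, List.range'_eq_map_range, List.map_map,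
        range_map_sum]
      refine Finset.sum_congr rfl fun i _ => ?_
      simp [Function.comp, Nat.add_comm 1 i, Nat.add_sub_cancel]
    -- convert the finsum hypothesis
    have hsub : Function.support s ⊆ ↑(Finset.range N) := by
      intro i hi
      simp only [Finset.coe_range, Set.mem_Iio]
      by_contra hge
      exact hi (hN i (by omega))
    have hA : ∑ᶠ i, s i = ∑ i ∈ Finset.range N, s i :=
      finsum_eq_sum_of_support_subset s hsub
    have hB : ∑ᶠ i, i * s i = ∑ i ∈ Finset.range N, i * s i := by
      refine finsum_eq_sum_of_support_subset _ fun i hi => hsub ?_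
      simp only [Function.support, Set.mem_setOf_eq] at hi ⊢
      intro h; rw [h, Nat.mul_zero] at hi; exact hi rfl
    rw [hA, hB] at hbal
    have hXsplit : ∑ i ∈ Finset.range N, s i
        = (∑ i ∈ Finset.range M, s (i + 1)) + s 0 := Finset.sum_range_succ' s M
    have hYsplit : ∑ i ∈ Finset.range N, i * s i
        = (∑ i ∈ Finset.range M, i * s (i + 1)) + (∑ i ∈ Finset.range M, s (i + 1)) := by
      rw [hNdef, Finset.sum_range_succ' (fun i => i * s i) M]
      simp only [Nat.zero_mul, Nat.add_zero, Nat.add_mul, Nat.one_mul]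
      rw [Finset.sum_add_distrib]
    have hYN : ∑ i ∈ Finset.range N, i * s (i + 1)
        = ∑ i ∈ Finset.range M, i * s (i + 1) := by
      rw [hNdef, Finset.sum_range_succ, hN (M + 1) le_rfl, Nat.mul_zero, Nat.add_zero]
    set X := ∑ i ∈ Finset.range M, s (i + 1) with hXdef
    set Y := ∑ i ∈ Finset.range M, i * s (i + 1) with hYdef
    refine ⟨cat ds, fun j => ?_⟩
    rw [ecd_eq_count, count_dfsDeg_cat j ds hds1, hcount, hsum, hYN]
    have hmemL : j ∈ L ↔ 1 ≤ j ∧ j < 1 + N := List.mem_range'_1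
    by_cases hj0 : j = 0
    · subst hj0
      have : (0 : ℕ) ∉ L := fun h => by have := (hmemL.mp h).1; omega
      rw [if_neg this, if_pos rfl]
      omega
    · rw [if_neg hj0, Nat.add_zero]
      by_cases hjL : j ∈ L
      · rw [if_pos hjL]
      · rw [if_neg hjL]
        have : ¬(1 ≤ j ∧ j < 1 + N) := fun h => hjL (hmemL.mpr h)
        have hjN : N + 1 ≤ j + 1 := by omega
        rw [hN j (by omega)]

open Paper Paper.PlaneTree in
/-- a finitely supported sequence `s` is the ECD of some finite plane tree
iff `s 0 ≥ 1` and `∑ s_i = 1 + ∑ i·s_i`. -/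
theorem tenable_iff (s : ℕ → ℕ) (hsupp : (Function.support s).Finite) :
    (∃ t : PlaneTree, ∀ i, ecd t i = s i) ↔
      (1 ≤ s 0 ∧ ∑ᶠ i, s i = 1 + ∑ᶠ i, i * s i) := by
  exact tenable_iff' s hsupp
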